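/- arXiv:2409.11559 — 2 statements merged into one kernel-verified Lean document; each statement's English description precedes it below -/
import Mathlib

section
/- Let n ≥ 1 and let s_1, ..., s_n be integers. Then gcd(s_1, s_2 + ... + s_n) + Σ_{i=2}^n gcd(s_1, s_i) ≡ n·s_1 (mod 2). -/
lemma zmod2_cases : ∀ y : ZMod 2, y ≠ 0 → y = 1 := by decide

lemma int_cast_one_of_not_dvd {x : ℤ} (hx : ¬ (2 ∣ x)) : (x : ZMod 2) = 1 := by
  apply zmod2_cases
  rwa [Ne, ZMod.intCast_zmod_eq_zero_iff_dvd]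

lemma gcd_parity_aux (a b : ℤ) : ((Int.gcd a b : ℤ) : ZMod 2) = a + b + a * b := by
  by_cases ha : 2 ∣ a <;> by_cases hb : 2 ∣ b
  · have hg : (2:ℤ) ∣ (Int.gcd a b : ℤ) := Int.dvd_coe_gcd ha hb
    rw [(ZMod.intCast_zmod_eq_zero_iff_dvd _ 2).2 hg,
        (ZMod.intCast_zmod_eq_zero_iff_dvd _ 2).2 ha,
        (ZMod.intCast_zmod_eq_zero_iff_dvd _ 2).2 hb]; ring
  · have hg : ¬ (2:ℤ) ∣ (Int.gcd a b : ℤ) := fun h => hb (h.trans (Int.gcd_dvd_right a b))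
    rw [int_cast_one_of_not_dvd hg, (ZMod.intCast_zmod_eq_zero_iff_dvd _ 2).2 ha,
        int_cast_one_of_not_dvd hb]; ring
  · have hg : ¬ (2:ℤ) ∣ (Int.gcd a b : ℤ) := fun h => ha (h.trans (Int.gcd_dvd_left a b))
    rw [int_cast_one_of_not_dvd hg, (ZMod.intCast_zmod_eq_zero_iff_dvd _ 2).2 hb,
        int_cast_one_of_not_dvd ha]; ring
  · have hg : ¬ (2:ℤ) ∣ (Int.gcd a b : ℤ) := fun h => ha (h.trans (Int.gcd_dvd_left a b))
    rw [int_cast_one_of_not_dvd hg, int_cast_one_of_not_dvd ha,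
        int_cast_one_of_not_dvd hb]; decide

lemma gcd_parity_aux' (a b : ℤ) : ((Int.gcd a b : ℕ) : ZMod 2) = a + b + a * b := by
  have h := gcd_parity_aux a b
  rwa [Int.cast_natCast] at h

theorem stmt3 (n : ℕ) (hn : 1 ≤ n) (s : ℕ → ℤ) :
    (Int.gcd (s 1) (∑ i ∈ Finset.Icc 2 n, s i) : ℤ)
      + ∑ i ∈ Finset.Icc 2 n, (Int.gcd (s 1) (s i) : ℤ)
      ≡ (n : ℤ) * s 1 [ZMOD 2] := by
  have hmod : ((2:ℕ):ℤ) = 2 := rfl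
  rw [← hmod, ← ZMod.intCast_eq_intCast_iff]
  push_cast
  simp only [gcd_parity_aux', Finset.sum_add_distrib, Finset.sum_const, Nat.card_Icc,
    nsmul_eq_mul]
  push_cast [← Finset.mul_sum]
  set S1 : ZMod 2 := (s 1 : ZMod 2) with hS1
  set T : ZMod 2 := ∑ i ∈ Finset.Icc 2 n, (s i : ZMod 2) with hT
  have hcard : ((n - 1 : ℕ) : ZMod 2) = (n : ZMod 2) - 1 := by
    rw [Nat.cast_sub hn, Nat.cast_one]
  rw [hcard]
  have h2 : (2 : ZMod 2) = 0 := rfl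
  linear_combination (T + S1 * T) * h2
end

section
/- Let T be a decorated rooted tree with root v_0 that has negative determinants and satisfies f(α) ≥ 0 for all arrows α. If v and v' are vertices with v < v' in the tree order (v lies on the path from v_0 to v'), then: (a) N_v < 0 implies N_{v'} < 0; (b) N_v ≤ 0 implies N_{v'} ≤ 0. Consequently, the sets {v ∈ V : N_v ≥ 0} and {v ∈ V : N_v > 0} are connected subsets of the tree. -/
open Finset
open scoped Classical

/-- A decorated tree: a finite tree on cells `C = V ∪ A`, where `isArrow`
distinguishes arrows (of valency 1) from vertices.  `f a` is the decoration of
the arrow `a`, and `q x y` is the decoration of the edge `{x,y}` near `x`.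
Decorations at arrows are `1`; decorations near a vertex are pairwise coprime. -/
structure DecTree where
  C : Type
  [fintypeC : Fintype C]
  [decEqC : DecidableEq C]
  G : SimpleGraph C
  [decAdj : DecidableRel G.Adj]
  isTree : G.IsTree
  isArrow : C → Prop
  [decArrow : DecidablePred isArrow]
  arrowValency : ∀ a, isArrow a → G.degree a = 1
  f : C → ℤ
  q : C → C → ℤ
  q_arrow : ∀ a x, isArrow a → G.Adj a x → q a x = 1
  q_coprime : ∀ v x y, ¬ isArrow v → G.Adj v x → G.Adj v y → x ≠ y →
    IsCoprime (q v x) (q v y)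

attribute [instance] DecTree.fintypeC DecTree.decEqC DecTree.decAdj DecTree.decArrow

namespace DecTree

variable (T : DecTree)

/-- The unique path between two cells of the tree. -/
noncomputable def path (x y : T.C) : T.G.Walk x y :=
  (T.isTree.existsUnique_path x y).exists.choose

/-- `xva T v a` is the quantity `x_{v,a}`: the decoration `f a` times the
product of the decorations `q(ε,u)` over all edges `ε = {u,w}` incident to the
path from `v` to `a` (i.e. `u` on the path, `w` off the path). -/
noncomputable def xva (v a : T.C) : ℤ :=
  T.f a * ∏ uw ∈ Finset.univ.filter (fun uw : T.C × T.C =>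
      uw.1 ∈ (T.path v a).support ∧ T.G.Adj uw.1 uw.2 ∧
        uw.2 ∉ (T.path v a).support),
    T.q uw.1 uw.2

/-- `xhat T v a` is `x̂_{v,a}`: as `x_{v,a}` but omitting edges incident to `v`. -/
noncomputable def xhat (v a : T.C) : ℤ :=
  T.f a * ∏ uw ∈ Finset.univ.filter (fun uw : T.C × T.C =>
      uw.1 ∈ (T.path v a).support ∧ uw.1 ≠ v ∧ T.G.Adj uw.1 uw.2 ∧
        uw.2 ∉ (T.path v a).support),
    T.q uw.1 uw.2

/-- The multiplicity `N_v = Σ_{α ∈ A∖A₀} x_{v,α}`. -/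
noncomputable def N (v : T.C) : ℤ :=
  ∑ a ∈ Finset.univ.filter (fun a => T.isArrow a ∧ T.f a ≠ 0), T.xva v a

/-- The multiplicity of the tree, `M(T) = -Σ_{v ∈ V∪A₀} N_v (δ_v - 2)`. -/
noncomputable def M : ℤ :=
  - ∑ v ∈ Finset.univ.filter (fun v => ¬ T.isArrow v ∨ T.f v = 0),
      T.N v * ((T.G.degree v : ℤ) - 2)

/-- `p(α, e_α) = Σ_{β ∈ (A∖A₀)∖{α}} x̂_{α,β}` for an arrow `α`. -/
noncomputable def parrow (a : T.C) : ℤ :=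
  ∑ b ∈ Finset.univ.filter (fun b => T.isArrow b ∧ T.f b ≠ 0 ∧ b ≠ a), T.xhat a b

/-- `F(T) = Σ_{α ∈ A∖A₀} gcd(f(α), p(α, e_α))`. -/
noncomputable def F : ℤ :=
  ∑ a ∈ Finset.univ.filter (fun a => T.isArrow a ∧ T.f a ≠ 0),
    (Int.gcd (T.f a) (T.parrow a) : ℤ)

/-- `Q(e,x)` for `e = {x,y}`: product of the decorations near `x` of the
other edges incident to `x`. -/
noncomputable def Qe (x y : T.C) : ℤ :=
  ∏ w ∈ (T.G.neighborFinset x).erase y, T.q x w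

/-- `lt T v0 x y` means `x < y` in the order rooted at `v0`:
`x ≠ y` and `x` lies on the path from `v0` to `y`. -/
def lt (v0 x y : T.C) : Prop :=
  x ≠ y ∧ x ∈ (T.path v0 y).support

/-- `v0` is a root: a vertex all of whose edge decorations are `1`, such that
for every other vertex `v`, all edges at `v` not on the path `γ_{v0,v}` have
decoration `≥ 1` near `v`, at most one of them being `> 1`. -/
def IsRoot (v0 : T.C) : Prop :=
  ¬ T.isArrow v0 ∧
  (∀ x, T.G.Adj v0 x → T.q v0 x = 1) ∧
  ∀ v, ¬ T.isArrow v → v ≠ v0 →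
    (∀ x, T.G.Adj v x → s(v, x) ∉ (T.path v0 v).edges → 1 ≤ T.q v x) ∧
    (∀ x y, T.G.Adj v x → T.G.Adj v y →
      s(v, x) ∉ (T.path v0 v).edges → s(v, y) ∉ (T.path v0 v).edges →
      1 < T.q v x → 1 < T.q v y → x = y)

/-- The tree has negative determinants: `det(e) < 0` for every edge `e`
joining two vertices. -/
def HasNegDet : Prop :=
  ∀ x y, ¬ T.isArrow x → ¬ T.isArrow y → T.G.Adj x y →
    T.q x y * T.q y x - T.Qe x y * T.Qe y x < 0

/-- A subset `S` of the cells is connected if every path whose endpoints lie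
in `S` lies entirely in `S`. -/
def ConnectedSet (S : Set T.C) : Prop :=
  ∀ x y, x ∈ S → y ∈ S → ∀ u, u ∈ (T.path x y).support → u ∈ S

/-- `φ(x,y)`: product of `q(ε,u)` over cells `u ≠ x` of the path from `x` to
`y` and edges `ε` incident to `u` not lying on the path. -/
noncomputable def phi (x y : T.C) : ℤ :=
  ∏ uw ∈ Finset.univ.filter (fun uw : T.C × T.C =>
      uw.1 ∈ (T.path x y).support ∧ uw.1 ≠ x ∧ T.G.Adj uw.1 uw.2 ∧
        uw.2 ∉ (T.path x y).support),
    T.q uw.1 uw.2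

end DecTree
namespace DecTree

open SimpleGraph Walk

variable (T : DecTree)

lemma path_isPath (x y : T.C) : (T.path x y).IsPath :=
  (T.isTree.existsUnique_path x y).exists.choose_spec

lemma path_eq {x y : T.C} (p : T.G.Walk x y) (hp : p.IsPath) : p = T.path x y :=
  ((T.isTree.existsUnique_path x y).unique hp (T.path_isPath x y))

lemma path_nil (x : T.C) : T.path x x = Walk.nil :=
  (T.path_eq Walk.nil (Walk.IsPath.nil)).symm

lemma path_adj {x y : T.C} (h : T.G.Adj x y) : T.path x y = Walk.cons h Walk.nil := by
  refine (T.path_eq _ ?_).symm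
  rw [Walk.cons_isPath_iff]
  exact ⟨Walk.IsPath.nil, by simp [h.ne]⟩

lemma path_reverse (x y : T.C) : T.path y x = (T.path x y).reverse :=
  (T.path_eq _ ((T.path_isPath x y).reverse)).symm

/-- Acyclicity workhorse: any walk between adjacent cells contains the edge. -/
lemma edge_mem_walk {a b : T.C} (h : T.G.Adj a b) (W : T.G.Walk a b) :
    s(a, b) ∈ W.edges := by
  have h1 : W.bypass = T.path a b := T.path_eq _ (W.bypass_isPath)
  have h2 : T.path a b = Walk.cons h Walk.nil := T.path_adj h
  have : s(a, b) ∈ W.bypass.edges := by rw [h1, h2]; simp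
  exact W.edges_bypass_subset this

lemma path_trans {a c : T.C} (b : T.C) (h : b ∈ (T.path a c).support) :
    T.path a c = (T.path a b).append (T.path b c) := by
  have ht : (T.path a c).takeUntil b h = T.path a b :=
    T.path_eq _ ((T.path_isPath a c).takeUntil h)
  have hd : (T.path a c).dropUntil b h = T.path b c :=
    T.path_eq _ ((T.path_isPath a c).dropUntil h)
  rw [← ht, ← hd, Walk.take_spec]

lemma mem_support_path_trans {a c : T.C} (b : T.C) (h : b ∈ (T.path a c).support)
    {x : T.C} (hx : x ∈ (T.path a c).support) :
    x ∈ (T.path a b).support ∨ x ∈ (T.path b c).support := by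
  rw [T.path_trans b h, Walk.mem_support_append_iff] at hx
  exact hx

lemma support_path_subset_trans {a c : T.C} (b : T.C) (h : b ∈ (T.path a c).support) :
    (T.path b c).support ⊆ (T.path a c).support := by
  intro x hx
  rw [T.path_trans b h, Walk.mem_support_append_iff]
  exact Or.inr hx

lemma support_path_subset_trans' {a c : T.C} (b : T.C) (h : b ∈ (T.path a c).support) :
    (T.path a b).support ⊆ (T.path a c).support := by
  intro x hx
  rw [T.path_trans b h, Walk.mem_support_append_iff]
  exact Or.inl hx

lemma edges_path_subset_trans {a c : T.C} (b : T.C) (h : b ∈ (T.path a c).support) :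
    (T.path b c).edges ⊆ (T.path a c).edges := by
  intro e he
  rw [T.path_trans b h, Walk.edges_append, List.mem_append]
  exact Or.inr he

lemma edges_path_subset_trans' {a c : T.C} (b : T.C) (h : b ∈ (T.path a c).support) :
    (T.path a b).edges ⊆ (T.path a c).edges := by
  intro e he
  rw [T.path_trans b h, Walk.edges_append, List.mem_append]
  exact Or.inl he

/-- T1: subadditivity of supports via bypass. -/
lemma support_path_sub (a b c : T.C) {x : T.C} (hx : x ∈ (T.path a c).support) :
    x ∈ (T.path a b).support ∨ x ∈ (T.path b c).support := by
  set W := (T.path a b).append (T.path b c) with hW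
  have h1 : W.bypass = T.path a c := T.path_eq _ (W.bypass_isPath)
  have := W.support_bypass_subset (by rw [h1]; exact hx)
  rwa [hW, Walk.mem_support_append_iff] at this

/-- Length comparison: if `b` lies on the path from `a` to `c` then the path to `b`
is no longer. -/
lemma path_length_le {a c : T.C} (b : T.C) (h : b ∈ (T.path a c).support) :
    (T.path a b).length ≤ (T.path a c).length := by
  rw [T.path_trans b h, Walk.length_append]
  omega

/-- Lemma F: mutual strict betweenness is impossible. -/
lemma not_both_mem {v0 x y : T.C} (hxy : x ≠ y) (hx : x ∈ (T.path v0 y).support)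
    (hy : y ∈ (T.path v0 x).support) : False := by
  have h1 := T.path_length_le x hx
  have h2 := T.path_length_le y hy
  have h3 : T.path v0 y = (T.path v0 x).append (T.path x y) := T.path_trans x hx
  have h4 : (T.path x y).length ≠ 0 := fun h => hxy (Walk.eq_of_length_eq_zero h)
  have h5 : (T.path v0 y).length = (T.path v0 x).length + (T.path x y).length := by
    rw [h3, Walk.length_append]
  omega

lemma exists_cons {a b : T.C} (p : T.G.Walk a b) (h : a ≠ b) :
    ∃ (c : T.C) (hadj : T.G.Adj a c) (q : T.G.Walk c b), p = Walk.cons hadj q := by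
  cases p with
  | nil => exact absurd rfl h
  | cons hadj q => exact ⟨_, hadj, q, rfl⟩

/-- A cell with two distinct neighbours is not an arrow. -/
lemma not_arrow_of_two {u a b : T.C} (ha : T.G.Adj u a) (hb : T.G.Adj u b) (hab : a ≠ b) :
    ¬ T.isArrow u := by
  intro hu
  have hd := T.arrowValency u hu
  have h2 : 2 ≤ T.G.degree u := by
    have : ({a, b} : Finset T.C) ⊆ T.G.neighborFinset u := by
      intro x hx
      simp only [Finset.mem_insert, Finset.mem_singleton] at hx
      rcases hx with rfl | rfl <;> simp [SimpleGraph.mem_neighborFinset, ha, hb]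
    calc 2 = ({a, b} : Finset T.C).card := by rw [Finset.card_pair hab]
    _ ≤ _ := Finset.card_le_card this
  omega

end DecTree
namespace DecTree

open SimpleGraph Walk

variable (T : DecTree)

lemma path_cons_of_not_mem {v v' α : T.C} (hadj : T.G.Adj v v')
    (hv : v ∉ (T.path v' α).support) :
    T.path v α = Walk.cons hadj (T.path v' α) := by
  refine (T.path_eq _ ?_).symm
  rw [Walk.cons_isPath_iff]
  exact ⟨T.path_isPath v' α, hv⟩

lemma not_mem_of_mem {v v' α : T.C} (hadj : T.G.Adj v v')
    (hv : v ∈ (T.path v' α).support) : v' ∉ (T.path v α).support := by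
  have h1 : T.path v' α = (T.path v' v).append (T.path v α) := T.path_trans v hv
  rw [T.path_adj hadj.symm] at h1
  simp only [Walk.cons_append, Walk.nil_append] at h1
  have h2 := T.path_isPath v' α
  rw [h1, Walk.cons_isPath_iff] at h2
  exact h2.2

/-- No "crossing" edges: if `v ∉ supp(path v' α)` and `v` is adjacent to both `v'`
and to some `w ∈ supp(path v' α)`, then `w = v'`. -/
lemma no_cross {v v' α w : T.C} (hadj : T.G.Adj v v')
    (hv : v ∉ (T.path v' α).support) (hw : w ∈ (T.path v' α).support)
    (hvw : T.G.Adj v w) : w = v' := by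
  by_contra hne
  set W : T.G.Walk v w := Walk.cons hadj ((T.path v' α).takeUntil w hw) with hW
  have hme := T.edge_mem_walk hvw W
  rw [hW, Walk.edges_cons, List.mem_cons] at hme
  rcases hme with h | h
  · exact hne (Sym2.congr_right.mp h)
  · exact hv ((T.path v' α).fst_mem_support_of_mem_edges
      ((T.path v' α).edges_takeUntil_subset hw h))

end DecTree
namespace DecTree

open SimpleGraph Walk Finset

variable (T : DecTree)

noncomputable def Sset (v a : T.C) : Finset (T.C × T.C) :=
  Finset.univ.filter (fun uw : T.C × T.C =>
    uw.1 ∈ (T.path v a).support ∧ T.G.Adj uw.1 uw.2 ∧ uw.2 ∉ (T.path v a).support)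

lemma xva_def' (v a : T.C) : T.xva v a = T.f a * ∏ uw ∈ T.Sset v a, T.q uw.1 uw.2 := rfl

lemma factor {v v' a : T.C} (hadj : T.G.Adj v v') (hv : v ∉ (T.path v' a).support) :
    T.xva v a = T.Qe v v' *
      (T.f a * ∏ uw ∈ (T.Sset v' a).erase (v', v), T.q uw.1 uw.2) ∧
    T.xva v' a = T.q v' v *
      (T.f a * ∏ uw ∈ (T.Sset v' a).erase (v', v), T.q uw.1 uw.2) := by
  have hpath : T.path v a = Walk.cons hadj (T.path v' a) := T.path_cons_of_not_mem hadj hv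
  have hsupp : (T.path v a).support = v :: (T.path v' a).support := by
    rw [hpath, Walk.support_cons]
  have hmem : (v', v) ∈ T.Sset v' a := by
    simp only [Sset, Finset.mem_filter, Finset.mem_univ, true_and]
    exact ⟨(T.path v' a).start_mem_support, hadj.symm, hv⟩
  constructor
  · -- xva v a
    rw [xva_def']
    have hsplit := Finset.prod_filter_mul_prod_filter_not (T.Sset v a)
      (fun uw : T.C × T.C => uw.1 = v) (fun uw : T.C × T.C => T.q uw.1 uw.2)
    have hc1 : (T.Sset v a).filter (fun uw : T.C × T.C => uw.1 = v) =
        ((T.G.neighborFinset v).erase v').image (fun w => (v, w)) := by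
      ext ⟨u, w⟩
      simp only [Sset, Finset.mem_filter, Finset.mem_univ, true_and, Finset.mem_image]
      constructor
      · rintro ⟨⟨_, hadjuw, hwn⟩, hu1⟩
        subst hu1
        have hwne : w ≠ v' := fun hwv' => hwn (by
          rw [hsupp, hwv']
          exact List.mem_cons_of_mem _ (T.path v' a).start_mem_support)
        exact ⟨w, Finset.mem_erase.mpr ⟨hwne, (SimpleGraph.mem_neighborFinset _ _ _).mpr hadjuw⟩, rfl⟩
      · rintro ⟨w', hw', heq⟩
        obtain ⟨hw'ne, hw'adj⟩ := Finset.mem_erase.mp hw'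
        have hadjw' : T.G.Adj v w' := (SimpleGraph.mem_neighborFinset _ _ _).mp hw'adj
        obtain ⟨rfl, rfl⟩ : v = u ∧ w' = w := Prod.mk.injEq _ _ _ _ ▸ heq
        refine ⟨⟨(T.path v a).start_mem_support, hadjw', ?_⟩, rfl⟩
        rw [hsupp]
        intro hmem'
        rcases List.mem_cons.mp hmem' with h | h
        · exact hadjw'.ne h.symm
        · exact hw'ne (T.no_cross hadj hv h hadjw')
    have hc2 : (T.Sset v a).filter (fun uw : T.C × T.C => ¬ uw.1 = v) =
        (T.Sset v' a).erase (v', v) := by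
      ext ⟨u, w⟩
      simp only [Sset, Finset.mem_filter, Finset.mem_univ, true_and, Finset.mem_erase]
      rw [hsupp]
      constructor
      · rintro ⟨⟨hu, hadjuw, hwn⟩, hune⟩
        rcases List.mem_cons.mp hu with h | hu'
        · exact absurd h hune
        have hwv : w ≠ v := fun h => hwn (h ▸ List.mem_cons_self)
        refine ⟨?_, hu', hadjuw, fun h => hwn (List.mem_cons_of_mem _ h)⟩
        intro h
        exact hwv (congrArg Prod.snd h)
      · rintro ⟨hne, hu, hadjuw, hwn⟩
        have huv : u ≠ v := fun h => hv (h ▸ hu)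
        have hwv : w ≠ v := by
          intro h
          subst h
          exact hne (by rw [T.no_cross hadj hv hu hadjuw.symm])
        refine ⟨⟨List.mem_cons_of_mem _ hu, hadjuw, ?_⟩, huv⟩
        intro hmem'
        rcases List.mem_cons.mp hmem' with h | h
        · exact hwv h
        · exact hwn h
    rw [← hsplit, hc1, hc2, Finset.prod_image (by intro x _ y _ h; exact (Prod.mk.injEq _ _ _ _ ▸ h).2)]
    have : ∏ w ∈ (T.G.neighborFinset v).erase v', T.q v w = T.Qe v v' := rfl
    rw [this]; ring
  · rw [xva_def', ← Finset.mul_prod_erase _ _ hmem]; ring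

end DecTree
namespace DecTree

open SimpleGraph Walk Finset

variable (T : DecTree)

lemma not_mem_trunk {v0 v v' : T.C} (hne : v ≠ v') (hvsup : v ∈ (T.path v0 v').support) :
    v' ∉ (T.path v0 v).support :=
  fun h => T.not_both_mem hne hvsup h

lemma trunk_decomp {v0 v v' : T.C} (hadj : T.G.Adj v v') (hvsup : v ∈ (T.path v0 v').support) :
    T.path v0 v' = (T.path v0 v).append (Walk.cons hadj Walk.nil) := by
  rw [T.path_trans v hvsup, T.path_adj hadj]

lemma v'_ne_v0 {v0 v v' : T.C} (hne : v ≠ v') (hvsup : v ∈ (T.path v0 v').support) :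
    v' ≠ v0 := by
  rintro rfl
  rw [T.path_nil] at hvsup
  simp only [Walk.support_nil, List.mem_singleton] at hvsup
  exact hne hvsup

lemma edge_at_top {v0 v v' w : T.C} (hadj : T.G.Adj v v')
    (hvsup : v ∈ (T.path v0 v').support) (hwv : w ≠ v) :
    s(v', w) ∉ (T.path v0 v').edges := by
  rw [T.trunk_decomp hadj hvsup, Walk.edges_append]
  intro hm
  rcases List.mem_append.mp hm with h | h
  · exact T.not_mem_trunk hadj.ne hvsup ((T.path v0 v).fst_mem_support_of_mem_edges h)
  · simp only [Walk.edges_cons, Walk.edges_nil, List.mem_singleton] at h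
    rcases Sym2.eq_iff.mp h with ⟨h1, _⟩ | ⟨_, h2⟩
    · exact hadj.ne' h1
    · exact hwv h2

lemma one_le_Qe {v0 v v' : T.C} (hroot : T.IsRoot v0) (hv'na : ¬ T.isArrow v')
    (hadj : T.G.Adj v v') (hvsup : v ∈ (T.path v0 v').support) :
    1 ≤ T.Qe v' v := by
  have h1 : ∀ w ∈ (T.G.neighborFinset v').erase v, 1 ≤ T.q v' w := by
    intro w hw
    obtain ⟨hwv, hwadj⟩ := Finset.mem_erase.mp hw
    have hadjw : T.G.Adj v' w := (SimpleGraph.mem_neighborFinset _ _ _).mp hwadj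
    exact (hroot.2.2 v' hv'na (T.v'_ne_v0 hadj.ne hvsup)).1 w hadjw
      (T.edge_at_top hadj hvsup hwv)
  calc (1 : ℤ) = ∏ _w ∈ (T.G.neighborFinset v').erase v, 1 := by simp
  _ ≤ T.Qe v' v := Finset.prod_le_prod (fun _ _ => zero_le_one) h1

lemma one_le_q {v0 v v' : T.C} (hroot : T.IsRoot v0) (hvna : ¬ T.isArrow v)
    (hadj : T.G.Adj v v') (hvsup : v ∈ (T.path v0 v').support) :
    1 ≤ T.q v v' := by
  by_cases hv0 : v = v0
  · subst hv0
    rw [hroot.2.1 v' hadj]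
  · refine (hroot.2.2 v hvna hv0).1 v' hadj ?_
    intro hm
    exact T.not_mem_trunk hadj.ne hvsup ((T.path v0 v).snd_mem_support_of_mem_edges hm)

/-- Lemma D: the trunk `path v0 v'` and a branch `path v' a` avoiding `v` meet only in `v'`. -/
lemma trunk_branch_inter {v0 v v' a x : T.C} (hadj : T.G.Adj v v')
    (hvsup : v ∈ (T.path v0 v').support) (hv : v ∉ (T.path v' a).support)
    (hx1 : x ∈ (T.path v0 v').support) (hx2 : x ∈ (T.path v' a).support) : x = v' := by
  by_contra hne
  rcases T.mem_support_path_trans x hx1 hvsup with hvx | hvx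
  · -- v ∈ supp(path v0 x): find the edge s(v,v') and derive a contradiction
    have hEdge : s(v, v') ∈ (T.path v0 v').edges := by
      rw [T.trunk_decomp hadj hvsup, Walk.edges_append]
      simp
    rw [T.path_trans x hx1, Walk.edges_append] at hEdge
    rcases List.mem_append.mp hEdge with h | h
    · have hv' : v' ∈ (T.path v0 x).support := (T.path v0 x).snd_mem_support_of_mem_edges h
      exact T.not_both_mem hne hx1 hv'
    · have : s(v, v') ∈ (T.path v' x).edges := by
        have := T.path_reverse x v'
        rw [T.path_reverse v' x] at h
        rwa [Walk.edges_reverse, List.mem_reverse] at h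
      have : s(v, v') ∈ (T.path v' a).edges := T.edges_path_subset_trans' x hx2 this
      exact hv ((T.path v' a).fst_mem_support_of_mem_edges this)
  · -- v ∈ supp(path x v') ⊆ supp(path v' a): contradiction
    rw [T.path_reverse v' x, Walk.support_reverse, List.mem_reverse] at hvx
    exact hv (T.support_path_subset_trans' x hx2 hvx)

/-- Positivity of the decorations appearing in the branch products. -/
lemma q_nonneg_side {v0 v v' a : T.C} (hroot : T.IsRoot v0) (hadj : T.G.Adj v v')
    (hvsup : v ∈ (T.path v0 v').support) (hv : v ∉ (T.path v' a).support)
    {uw : T.C × T.C} (hm : uw ∈ (T.Sset v' a).erase (v', v)) :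
    0 ≤ T.q uw.1 uw.2 := by
  obtain ⟨u, w⟩ := uw
  obtain ⟨hnevv, hmem⟩ := Finset.mem_erase.mp hm
  simp only [Sset, Finset.mem_filter, Finset.mem_univ, true_and] at hmem
  obtain ⟨hu, hadjuw, hwn⟩ := hmem
  by_cases harr : T.isArrow u
  · rw [T.q_arrow u w harr hadjuw]; exact zero_le_one
  by_cases hu0 : u = v0
  · subst hu0
    rw [hroot.2.1 w hadjuw]; exact zero_le_one
  refine le_trans zero_le_one ((hroot.2.2 u harr hu0).1 w hadjuw ?_)
  -- show s(u,w) ∉ edges(path v0 u)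
  by_cases huv' : u = v'
  · subst huv'
    have hwv : w ≠ v := by
      intro h
      exact hnevv (by rw [h])
    exact T.edge_at_top hadj hvsup hwv
  · -- u ≠ v'
    have hunotin : u ∉ (T.path v0 v').support := by
      intro h
      exact huv' (T.trunk_branch_inter hadj hvsup hv h hu)
    have hwnotin : w ∉ (T.path v0 v').support := by
      intro hw
      set W2 : T.G.Walk u w := (T.path u v').append (T.path v' w) with hW2
      have hme := T.edge_mem_walk hadjuw W2
      rw [hW2, Walk.edges_append] at hme
      rcases List.mem_append.mp hme with h | h
      · rw [T.path_reverse v' u, Walk.edges_reverse, List.mem_reverse] at h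
        have : s(u, w) ∈ (T.path v' a).edges := T.edges_path_subset_trans' u hu h
        exact hwn ((T.path v' a).snd_mem_support_of_mem_edges this)
      · rw [T.path_reverse w v', Walk.edges_reverse, List.mem_reverse] at h
        have : s(u, w) ∈ (T.path v0 v').edges := T.edges_path_subset_trans w hw h
        exact hunotin ((T.path v0 v').fst_mem_support_of_mem_edges this)
    intro hm'
    have hwmem : w ∈ (T.path v0 u).support := (T.path v0 u).snd_mem_support_of_mem_edges hm'
    rcases T.support_path_sub v0 v' u hwmem with h | h
    · exact hwnotin h
    · exact hwn (T.support_path_subset_trans' u hu h)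

end DecTree
namespace DecTree

open SimpleGraph Walk Finset

variable (T : DecTree)

lemma edge_ineq {v0 v v' : T.C} (hroot : T.IsRoot v0) (hneg : T.HasNegDet)
    (hf : ∀ a, T.isArrow a → 0 ≤ T.f a)
    (hvna : ¬ T.isArrow v) (hv'na : ¬ T.isArrow v') (hadj : T.G.Adj v v')
    (hvsup : v ∈ (T.path v0 v').support) :
    T.q v v' * T.N v' ≤ T.Qe v' v * T.N v := by
  classical
  set A' := Finset.univ.filter (fun a => T.isArrow a ∧ T.f a ≠ 0) with hA'
  have hsum : T.q v v' * T.N v' - T.Qe v' v * T.N v =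
      ∑ a ∈ A', (T.q v v' * T.xva v' a - T.Qe v' v * T.xva v a) := by
    rw [N, N, Finset.mul_sum, Finset.mul_sum, ← Finset.sum_sub_distrib]
  have hdet : T.q v v' * T.q v' v - T.Qe v v' * T.Qe v' v < 0 :=
    hneg v v' hvna hv'na hadj
  have hkey : ∑ a ∈ A', (T.q v v' * T.xva v' a - T.Qe v' v * T.xva v a) ≤ 0 := by
    rw [← Finset.sum_filter_add_sum_filter_not A' (fun a => v ∉ (T.path v' a).support)]
    have h2 : ∑ a ∈ A'.filter (fun a => ¬ v ∉ (T.path v' a).support),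
        (T.q v v' * T.xva v' a - T.Qe v' v * T.xva v a) = 0 := by
      refine Finset.sum_eq_zero ?_
      intro a ha
      have hP : v ∈ (T.path v' a).support := by
        have := (Finset.mem_filter.mp ha).2
        simpa using this
      have hv'n : v' ∉ (T.path v a).support := T.not_mem_of_mem hadj hP
      obtain ⟨f1, f2⟩ := T.factor hadj.symm hv'n
      rw [f1, f2]; ring
    have h1 : ∑ a ∈ A'.filter (fun a => v ∉ (T.path v' a).support),
        (T.q v v' * T.xva v' a - T.Qe v' v * T.xva v a) ≤ 0 := by
      refine Finset.sum_nonpos ?_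
      intro a ha
      obtain ⟨haA, hP⟩ := Finset.mem_filter.mp ha
      obtain ⟨harrow, _⟩ := (Finset.mem_filter.mp haA).2
      obtain ⟨f1, f2⟩ := T.factor hadj hP
      rw [f1, f2]
      set y := T.f a * ∏ uw ∈ (T.Sset v' a).erase (v', v), T.q uw.1 uw.2 with hy
      have hy0 : 0 ≤ y :=
        mul_nonneg (hf a harrow)
          (Finset.prod_nonneg (fun uw hm => T.q_nonneg_side hroot hadj hvsup hP hm))
      have : T.q v v' * (T.q v' v * y) - T.Qe v' v * (T.Qe v v' * y) =
          (T.q v v' * T.q v' v - T.Qe v v' * T.Qe v' v) * y := by ring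
      rw [this]
      exact mul_nonpos_of_nonpos_of_nonneg (le_of_lt hdet) hy0
    linarith
  linarith [hsum, hkey]

lemma edge_mono {v0 v v' : T.C} (hroot : T.IsRoot v0) (hneg : T.HasNegDet)
    (hf : ∀ a, T.isArrow a → 0 ≤ T.f a)
    (hvna : ¬ T.isArrow v) (hv'na : ¬ T.isArrow v') (hadj : T.G.Adj v v')
    (hvsup : v ∈ (T.path v0 v').support) :
    (T.N v < 0 → T.N v' < 0) ∧ (T.N v ≤ 0 → T.N v' ≤ 0) := by
  have hle := T.edge_ineq hroot hneg hf hvna hv'na hadj hvsup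
  have hq := T.one_le_q hroot hvna hadj hvsup
  have hQ := T.one_le_Qe hroot hv'na hadj hvsup
  constructor
  · intro h
    nlinarith
  · intro h
    nlinarith

end DecTree
namespace DecTree

open SimpleGraph Walk Finset

variable (T : DecTree)

lemma mono_aux {v0 : T.C} (hroot : T.IsRoot v0) (hneg : T.HasNegDet)
    (hf : ∀ a, T.isArrow a → 0 ≤ T.f a) :
    ∀ (n : ℕ) (v' v : T.C), (T.path v0 v').length ≤ n →
      ¬ T.isArrow v → ¬ T.isArrow v' → T.lt v0 v v' →
      (T.N v < 0 → T.N v' < 0) ∧ (T.N v ≤ 0 → T.N v' ≤ 0) := by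
  intro n
  induction n with
  | zero =>
    intro v' v hlen hvna hv'na hlt
    obtain ⟨hne, hvsup⟩ := hlt
    have h0 : (T.path v0 v').length = 0 := Nat.le_zero.mp hlen
    have : v0 = v' := Walk.eq_of_length_eq_zero h0
    subst this
    rw [T.path_nil] at hvsup
    simp only [Walk.support_nil, List.mem_singleton] at hvsup
    exact absurd hvsup hne
  | succ n ih =>
    intro v' v hlen hvna hv'na hlt
    obtain ⟨hne, hvsup⟩ := hlt
    obtain ⟨u, h, qw, hq⟩ := T.exists_cons (T.path v' v) (Ne.symm hne)
    have hqpath : (Walk.cons h qw).IsPath := hq ▸ T.path_isPath v' v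
    rw [Walk.cons_isPath_iff] at hqpath
    obtain ⟨hqw, hv'notin⟩ := hqpath
    have humem : u ∈ (T.path v' v).support := by
      rw [hq, Walk.support_cons]
      exact List.mem_cons_of_mem _ qw.start_mem_support
    have hu_sup : u ∈ (T.path v0 v').support := by
      have h1 : u ∈ (T.path v v').support := by
        rw [T.path_reverse v' v, Walk.support_reverse, List.mem_reverse]
        exact humem
      exact T.support_path_subset_trans v hvsup h1
    have hadj' : T.G.Adj u v' := h.symm
    have hune : u ≠ v' := fun e => hv'notin (e ▸ qw.start_mem_support)
    have hu_na : ¬ T.isArrow u := by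
      by_cases hvu : v = u
      · exact hvu ▸ hvna
      · obtain ⟨u2, h2, q2, hq2⟩ := T.exists_cons qw (Ne.symm hvu)
        have hu2mem : u2 ∈ qw.support := by
          rw [hq2, Walk.support_cons]
          exact List.mem_cons_of_mem _ q2.start_mem_support
        have hu2ne : u2 ≠ v' := fun e => hv'notin (e ▸ hu2mem)
        exact T.not_arrow_of_two h2 hadj' hu2ne
    have step := T.edge_mono hroot hneg hf hu_na hv'na hadj' hu_sup
    by_cases hvu : v = u
    · subst hvu; exact step
    · have hdec : T.path v0 v' = (T.path v0 u).append (T.path u v') :=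
        T.path_trans u hu_sup
      have hlen1 : (T.path u v').length = 1 := by rw [T.path_adj hadj']; simp
      have hlen' : (T.path v0 u).length ≤ n := by
        have := congrArg Walk.length hdec
        rw [Walk.length_append, hlen1] at this
        omega
      have hvmem_u : v ∈ (T.path v0 u).support := by
        rcases T.mem_support_path_trans u hu_sup hvsup with h' | h'
        · exact h'
        · rw [T.path_adj hadj'] at h'
          simp only [Walk.support_cons, Walk.support_nil, List.mem_cons,
            List.mem_singleton, List.not_mem_nil, or_false] at h'
          rcases h' with h1 | h1
          · exact absurd h1 hvu
          · exact absurd h1 hne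
      have hrec := ih u v hlen' hvna hu_na ⟨hvu, hvmem_u⟩
      exact ⟨fun hh => step.1 (hrec.1 hh), fun hh => step.2 (hrec.2 hh)⟩

lemma conn_of_mono (v0 : T.C) (P : T.C → Prop)
    (hmono : ∀ v v', ¬ T.isArrow v → ¬ T.isArrow v' → T.lt v0 v v' → P v' → P v) :
    T.ConnectedSet {v | ¬ T.isArrow v ∧ P v} := by
  intro x y hx hy u hu
  by_cases hux : u = x
  · exact hux ▸ hx
  by_cases huy : u = y
  · exact huy ▸ hy
  have hnotarrow : ¬ T.isArrow u := by
    obtain ⟨a1, h1, q1, hq1⟩ := T.exists_cons (T.path u x) hux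
    obtain ⟨a2, h2, q2, hq2⟩ := T.exists_cons (T.path u y) huy
    refine T.not_arrow_of_two h1 h2 ?_
    intro heq
    subst heq
    -- a1 lies in both path x u and the tail of path u y, contradicting nodup
    have hdecomp : T.path x y = (T.path x u).append (T.path u y) := T.path_trans u hu
    have hnodup : (T.path x y).support.Nodup := (T.path_isPath x y).support_nodup
    rw [hdecomp, Walk.support_append] at hnodup
    have hdisj := (List.nodup_append.mp hnodup).2.2
    have hmem1 : a1 ∈ (T.path x u).support := by
      rw [T.path_reverse u x, Walk.support_reverse, List.mem_reverse]
      rw [hq1, Walk.support_cons]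
      exact List.mem_cons_of_mem _ q1.start_mem_support
    have hmem2 : a1 ∈ (T.path u y).support.tail := by
      rw [hq2, Walk.support_cons]
      exact q2.start_mem_support
    exact hdisj a1 hmem1 a1 hmem2 rfl
  rcases T.support_path_sub x v0 y hu with hmem | hmem
  · rw [T.path_reverse v0 x, Walk.support_reverse, List.mem_reverse] at hmem
    exact ⟨hnotarrow, hmono u x hnotarrow hx.1 ⟨hux, hmem⟩ hx.2⟩
  · exact ⟨hnotarrow, hmono u y hnotarrow hy.1 ⟨huy, hmem⟩ hy.2⟩

end DecTree
/-- In a decorated rooted tree with negative determinants and nonnegative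
arrow decorations: if `v < v'` are vertices then `N_v < 0 → N_{v'} < 0` and
`N_v ≤ 0 → N_{v'} ≤ 0`; moreover the sets of vertices with `N_v ≥ 0` and with
`N_v > 0` are connected. -/
theorem stmt14 (T : DecTree) (v0 : T.C) (hroot : T.IsRoot v0)
    (hneg : T.HasNegDet) (hf : ∀ a, T.isArrow a → 0 ≤ T.f a) :
    (∀ v v', ¬ T.isArrow v → ¬ T.isArrow v' → T.lt v0 v v' →
      (T.N v < 0 → T.N v' < 0) ∧ (T.N v ≤ 0 → T.N v' ≤ 0)) ∧
    T.ConnectedSet {v | ¬ T.isArrow v ∧ 0 ≤ T.N v} ∧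
    T.ConnectedSet {v | ¬ T.isArrow v ∧ 0 < T.N v} := by
  have main : ∀ v v', ¬ T.isArrow v → ¬ T.isArrow v' → T.lt v0 v v' →
      (T.N v < 0 → T.N v' < 0) ∧ (T.N v ≤ 0 → T.N v' ≤ 0) := by
    intro v v' hv hv' hlt
    exact T.mono_aux hroot hneg hf (T.path v0 v').length v' v le_rfl hv hv' hlt
  refine ⟨main, ?_, ?_⟩
  · refine T.conn_of_mono v0 (fun v => 0 ≤ T.N v) ?_
    intro v v' hv hv' hlt hP
    by_contra hc
    push_neg at hc
    exact absurd hP (not_le.mpr ((main v v' hv hv' hlt).1 hc))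
  · refine T.conn_of_mono v0 (fun v => 0 < T.N v) ?_
    intro v v' hv hv' hlt hP
    by_contra hc
    push_neg at hc
    exact absurd hP (not_lt.mpr ((main v v' hv hv' hlt).2 hc))
end
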